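/- Let $\mu$ be a Borel probability measure on $\mathbb{T}^n \times \mathbb{R}^n$ with $\int L\,d\mu = 0$ and $\int(v\cdot D\varphi - a\Delta\varphi)\,d\mu = 0$ for all $\varphi \in C^2(\mathbb{T}^n)$. Let $u \in C(\mathbb{T}^n)$ and suppose for each $\eta > 0$ there exist $\psi^\eta \in C^2(\mathbb{T}^n)$ and continuous $S^\eta$ with $\|S^\eta\|_\infty \le C$ uniformly, $S^\eta \to 0$ pointwise as $\eta\to 0$, such that $\varepsilon u(x) + H(x, D\psi^\eta(x)) - a(x)\Delta\psi^\eta(x) \le S^\eta(x)$ on $\mathbb{T}^n$. Then $\int_{\mathbb{T}^n\times\mathbb{R}^n} u(x)\,d\mu(x,v) \le 0$. -/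

import Mathlib

open MeasureTheory Filter

noncomputable section

def ZnPeriodic {n : ℕ} {α : Type*} (f : EuclideanSpace ℝ (Fin n) → α) : Prop :=
  ∀ (x : EuclideanSpace ℝ (Fin n)) (k : Fin n → ℤ),
    f (x + (WithLp.equiv 2 (Fin n → ℝ)).symm fun i => (k i : ℝ)) = f x

def lap {n : ℕ} (f : EuclideanSpace ℝ (Fin n) → ℝ)
    (x : EuclideanSpace ℝ (Fin n)) : ℝ :=
  ∑ i : Fin n, fderiv ℝ (fun y => fderiv ℝ f y (EuclideanSpace.single i 1)) x
    (EuclideanSpace.single i 1)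

/-- A probability measure on `𝕋ⁿ × ℝⁿ` is holonomic if
`∫ (v·Dφ − aΔφ) dμ = 0` for all `φ ∈ C²(𝕋ⁿ)`. -/
def Holonomic {n : ℕ} (a : EuclideanSpace ℝ (Fin n) → ℝ)
    (μ : Measure (EuclideanSpace ℝ (Fin n) × EuclideanSpace ℝ (Fin n))) : Prop :=
  ∀ φ : EuclideanSpace ℝ (Fin n) → ℝ, ContDiff ℝ 2 φ → ZnPeriodic φ →
    ∫ q, ((inner ℝ q.2 (gradient φ q.1) : ℝ) - a q.1 * lap φ q.1) ∂μ = 0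

/-- Any continuous periodic function is bounded. -/
lemma ZnPeriodic.bounded {n : ℕ} {f : EuclideanSpace ℝ (Fin n) → ℝ}
    (hper : ZnPeriodic f) (hf : Continuous f) : ∃ M, ∀ x, |f x| ≤ M := by
  have hK : IsCompact {x : EuclideanSpace ℝ (Fin n) | ∀ i, x i ∈ Set.Icc (0:ℝ) 1} := by
    have h1 : IsCompact (Set.univ.pi fun _ : Fin n => Set.Icc (0:ℝ) 1) :=
      isCompact_univ_pi fun _ => isCompact_Icc
    have h2 := (EuclideanSpace.equiv (Fin n) ℝ).toHomeomorph.isCompact_preimage.mpr h1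
    convert h2 using 1
    ext x
    simp only [Set.mem_setOf_eq, Set.mem_preimage, Set.mem_pi, Set.mem_univ, true_implies]
    exact Iff.rfl
  obtain ⟨M, hM⟩ := hK.exists_bound_of_continuousOn hf.continuousOn
  refine ⟨M, fun x => ?_⟩
  have hmem : (x + (WithLp.equiv 2 (Fin n → ℝ)).symm fun i => ((-⌊x i⌋ : ℤ) : ℝ)) ∈
      {x : EuclideanSpace ℝ (Fin n) | ∀ i, x i ∈ Set.Icc (0:ℝ) 1} := by
    intro i
    have hxi : (x + (WithLp.equiv 2 (Fin n → ℝ)).symm fun i => ((-⌊x i⌋ : ℤ) : ℝ)) i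
        = x i - ⌊x i⌋ := by
      rw [PiLp.add_apply]
      change x i + ((-⌊x i⌋ : ℤ) : ℝ) = _
      push_cast
      ring
    rw [hxi]
    constructor
    · linarith [Int.floor_le (x i)]
    · linarith [Int.lt_floor_add_one (x i)]
  have hb := hM _ hmem
  rw [hper x (fun i => -⌊x i⌋)] at hb
  simpa [Real.norm_eq_abs] using hb

lemma fderiv_shift {E G : Type*} [NormedAddCommGroup E] [NormedSpace ℝ E]
    [NormedAddCommGroup G] [NormedSpace ℝ G] {f : E → G} (hf : Differentiable ℝ f)
    (c x : E) : fderiv ℝ (fun y => f (y + c)) x = fderiv ℝ f (x + c) := by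
  have h1 : HasFDerivAt (fun y : E => y + c) (ContinuousLinearMap.id ℝ E) x :=
    (hasFDerivAt_id x).add_const c
  have h2 := ((hf (x + c)).hasFDerivAt.comp x h1)
  exact h2.fderiv

lemma ZnPeriodic.fderiv_per {n : ℕ} {G : Type*} [NormedAddCommGroup G] [NormedSpace ℝ G]
    {f : EuclideanSpace ℝ (Fin n) → G} (hper : ZnPeriodic f) (hf : Differentiable ℝ f) :
    ZnPeriodic (fderiv ℝ f) := by
  intro x k
  set c : EuclideanSpace ℝ (Fin n) :=
    (WithLp.equiv 2 (Fin n → ℝ)).symm fun i => ((k i : ℝ)) with hc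
  have hfe : (fun y => f (y + c)) = f := funext fun y => hper y k
  have h := fderiv_shift hf c x
  rw [hfe] at h
  exact h.symm

/-- Proposition 2.5: if `μ` has zero action and is holonomic,
`u ∈ C(𝕋ⁿ)`, `ε > 0`, and for each `η > 0` there are `ψ^η ∈ C²` and errors
`S^η` (uniformly bounded, → 0 pointwise) with
`εu + H(x,Dψ^η) − aΔψ^η ≤ S^η`, then `∫ u dμ ≤ 0`. -/
theorem discounted_integral_nonpos {n : ℕ}
    (H L : EuclideanSpace ℝ (Fin n) → EuclideanSpace ℝ (Fin n) → ℝ)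
    (a : EuclideanSpace ℝ (Fin n) → ℝ)
    (ha : ContDiff ℝ 2 a) (haper : ZnPeriodic a) (hapos : ∀ x, 0 ≤ a x)
    (hconv : ∀ x, ConvexOn ℝ Set.univ (H x))
    (hleg : ∀ x v, IsLUB {r : ℝ | ∃ p, r = inner ℝ p v - H x p} (L x v))
    (μ : Measure (EuclideanSpace ℝ (Fin n) × EuclideanSpace ℝ (Fin n)))
    (hμ : IsProbabilityMeasure μ)
    (hμv : Integrable (fun q => ‖q.2‖) μ)
    (hμhol : Holonomic a μ)
    (hμL : Integrable (fun q => L q.1 q.2) μ)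
    (hμL0 : ∫ q, L q.1 q.2 ∂μ = 0)
    (u : EuclideanSpace ℝ (Fin n) → ℝ) (hu : Continuous u) (huper : ZnPeriodic u)
    (ε : ℝ) (hε : 0 < ε)
    (Ψ S : ℝ → EuclideanSpace ℝ (Fin n) → ℝ) (C : ℝ)
    (hΨ : ∀ η : ℝ, 0 < η → ContDiff ℝ 2 (Ψ η) ∧ ZnPeriodic (Ψ η))
    (hS : ∀ η : ℝ, 0 < η → Continuous (S η) ∧ ZnPeriodic (S η) ∧ ∀ x, |S η x| ≤ C)
    (hS0 : ∀ x, Tendsto (fun η => S η x) (nhdsWithin 0 (Set.Ioi 0)) (nhds 0))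
    (hsub : ∀ η : ℝ, 0 < η → ∀ x,
      ε * u x + H x (gradient (Ψ η) x) - a x * lap (Ψ η) x ≤ S η x) :
    ∫ q, u q.1 ∂μ ≤ 0 := by
  -- bounded continuous periodic functions of x are integrable
  have hbddInt : ∀ f : EuclideanSpace ℝ (Fin n) → ℝ, Continuous f → ZnPeriodic f →
      Integrable (fun q : EuclideanSpace ℝ (Fin n) × EuclideanSpace ℝ (Fin n) => f q.1) μ := by
    intro f hf hfp
    obtain ⟨M, hM⟩ := hfp.bounded hf
    exact ⟨(hf.comp continuous_fst).aestronglyMeasurable,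
      HasFiniteIntegral.of_bounded (C := M)
        (ae_of_all _ fun q => by simpa [Real.norm_eq_abs] using hM q.1)⟩
  have hIu : Integrable (fun q : EuclideanSpace ℝ (Fin n) × EuclideanSpace ℝ (Fin n) => u q.1) μ :=
    hbddInt u hu huper
  set I := ∫ q, u q.1 ∂μ with hI
  have key : ∀ η : ℝ, 0 < η → ε * I ≤ ∫ q, S η q.1 ∂μ := by
    intro η hη
    obtain ⟨hψ, hψper⟩ := hΨ η hη
    obtain ⟨hScont, hSper, hSbd⟩ := hS η hη
    have hψd : Differentiable ℝ (Ψ η) := hψ.differentiable two_ne_zero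
    have hfd1 : ContDiff ℝ 1 (fderiv ℝ (Ψ η)) := hψ.fderiv_right (by norm_num)
    -- gradient
    have hgradcont : Continuous (gradient (Ψ η)) := by
      show Continuous fun x => (InnerProductSpace.toDual ℝ _).symm (fderiv ℝ (Ψ η) x)
      exact (InnerProductSpace.toDual ℝ _).symm.continuous.comp
        (hψ.continuous_fderiv two_ne_zero)
    have hgradper : ZnPeriodic (gradient (Ψ η)) := fun x k =>
      congrArg (InnerProductSpace.toDual ℝ _).symm (hψper.fderiv_per hψd x k)
    -- laplacian
    have hgi : ∀ i : Fin n, ContDiff ℝ 1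
        (fun y => fderiv ℝ (Ψ η) y (EuclideanSpace.single i 1)) := fun i =>
      hfd1.clm_apply contDiff_const
    have hlapcont : Continuous (lap (Ψ η)) := by
      unfold lap
      refine continuous_finset_sum _ fun i _ => ?_
      exact ((hgi i).continuous_fderiv one_ne_zero).clm_apply continuous_const
    have hlapper : ZnPeriodic (lap (Ψ η)) := by
      intro x k
      unfold lap
      refine Finset.sum_congr rfl fun i _ => ?_
      have hgip : ZnPeriodic (fun y => fderiv ℝ (Ψ η) y (EuclideanSpace.single i 1)) :=
        fun y k => congrArg (fun T : _ →L[ℝ] ℝ => T (EuclideanSpace.single i 1))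
          (hψper.fderiv_per hψd y k)
      exact congrArg (fun T : _ →L[ℝ] ℝ => T (EuclideanSpace.single i 1))
        (hgip.fderiv_per ((hgi i).differentiable one_ne_zero) x k)
    -- bounds
    have hgradnorm_per : ZnPeriodic (fun x => ‖gradient (Ψ η) x‖) :=
      fun x k => congrArg norm (hgradper x k)
    obtain ⟨Mg, hMg⟩ := hgradnorm_per.bounded hgradcont.norm
    -- integrability of the holonomy integrand
    have h1 : Integrable (fun q : EuclideanSpace ℝ (Fin n) × EuclideanSpace ℝ (Fin n) =>
        (inner ℝ q.2 (gradient (Ψ η) q.1) : ℝ)) μ := by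
      refine (hμv.mul_const Mg).mono'
        (continuous_snd.inner (hgradcont.comp continuous_fst)).aestronglyMeasurable
        (ae_of_all _ fun q => ?_)
      calc ‖(inner ℝ q.2 (gradient (Ψ η) q.1) : ℝ)‖
          ≤ ‖q.2‖ * ‖gradient (Ψ η) q.1‖ := norm_inner_le_norm _ _
        _ ≤ ‖q.2‖ * Mg := by
            have := hMg q.1
            have h0 : (0:ℝ) ≤ ‖q.2‖ := norm_nonneg _
            have := abs_le.mp this
            nlinarith [norm_nonneg (gradient (Ψ η) q.1)]
    have h2 : Integrable (fun q : EuclideanSpace ℝ (Fin n) × EuclideanSpace ℝ (Fin n) =>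
        a q.1 * lap (Ψ η) q.1) μ := by
      refine hbddInt _ ((ha.continuous).mul hlapcont) ?_
      intro x k
      exact congrArg₂ (· * ·) (haper x k) (hlapper x k)
    have hIhol : Integrable (fun q : EuclideanSpace ℝ (Fin n) × EuclideanSpace ℝ (Fin n) =>
        (inner ℝ q.2 (gradient (Ψ η) q.1) : ℝ) - a q.1 * lap (Ψ η) q.1) μ := h1.sub h2
    have hIS : Integrable (fun q : EuclideanSpace ℝ (Fin n) × EuclideanSpace ℝ (Fin n) =>
        S η q.1) μ := hbddInt _ hScont hSper
    -- pointwise inequality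
    have hmono : ∀ q : EuclideanSpace ℝ (Fin n) × EuclideanSpace ℝ (Fin n),
        ε * u q.1 ≤ S η q.1 + L q.1 q.2 -
          ((inner ℝ q.2 (gradient (Ψ η) q.1) : ℝ) - a q.1 * lap (Ψ η) q.1) := by
      intro q
      have hf : (inner ℝ (gradient (Ψ η) q.1) q.2 : ℝ) - H q.1 (gradient (Ψ η) q.1)
          ≤ L q.1 q.2 := (hleg q.1 q.2).1 ⟨gradient (Ψ η) q.1, rfl⟩
      have h3 := hsub η hη q.1
      have hcomm : (inner ℝ q.2 (gradient (Ψ η) q.1) : ℝ)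
          = (inner ℝ (gradient (Ψ η) q.1) q.2 : ℝ) := real_inner_comm _ _
      linarith
    have hIg : Integrable (fun q : EuclideanSpace ℝ (Fin n) × EuclideanSpace ℝ (Fin n) =>
        S η q.1 + L q.1 q.2 -
          ((inner ℝ q.2 (gradient (Ψ η) q.1) : ℝ) - a q.1 * lap (Ψ η) q.1)) μ :=
      (hIS.add hμL).sub hIhol
    have hIadd : Integrable (fun q : EuclideanSpace ℝ (Fin n) × EuclideanSpace ℝ (Fin n) =>
        S η q.1 + L q.1 q.2) μ := hIS.add hμL
    have hint := integral_mono (hIu.const_mul ε) hIg hmono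
    rw [integral_sub hIadd hIhol, integral_add hIS hμL, hμL0,
      hμhol (Ψ η) hψ hψper, integral_const_mul] at hint
    simpa using hint
  -- pass to the limit
  have hlim : Tendsto (fun η => ∫ q, S η q.1 ∂μ) (nhdsWithin 0 (Set.Ioi 0))
      (nhds (∫ _q, (0:ℝ) ∂μ)) := by
    apply tendsto_integral_filter_of_dominated_convergence (fun _ => C)
    · filter_upwards [self_mem_nhdsWithin] with η hη
      exact (((hS η hη).1).comp continuous_fst).aestronglyMeasurable
    · filter_upwards [self_mem_nhdsWithin] with η hη
      exact ae_of_all _ fun q => by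
        simpa [Real.norm_eq_abs] using (hS η hη).2.2 q.1
    · exact integrable_const C
    · exact ae_of_all _ fun q => hS0 q.1
  rw [integral_zero] at hlim
  have hεI : ε * I ≤ 0 := by
    refine ge_of_tendsto hlim ?_
    filter_upwards [self_mem_nhdsWithin] with η hη using key η hη
  nlinarith

end
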